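/- Let n, m be positive integers with n mod m > 0 and suppose the memory capacity satisfies Q > ⌈n/m⌉ (unit memory per instance). Then there is an assignment of n applications, each of load p, to m machines, each machine receiving at most Q instances, achieving maximum machine load exactly p·n/m (the trivial lower bound). -/

import Mathlib

open Finset

lemma clamp_eq (a b s t : ℚ) (hab : a ≤ b) (hst : s ≤ t) :
    max 0 (min b t - max a s) = max a (min b t) - max a (min b s) := by
  rcases le_total (max a s) (min b t) with h | h
  · have h1 : a ≤ min b t := le_trans (le_max_left a s) h
    have h2 : s ≤ b := le_trans (le_max_right a s) (h.trans (min_le_left b t))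
    rw [max_eq_right (sub_nonneg.2 h), max_eq_right h1, min_eq_right h2]
  · rw [max_eq_left (sub_nonpos.2 h)]
    rcases le_total b t with h1 | h1 <;> rcases le_total b s with h2 | h2 <;>
      rcases le_total a t with h3 | h3 <;> rcases le_total a s with h4 | h4 <;>
      simp_all [min_eq_left, min_eq_right, max_eq_left, max_eq_right] <;> linarith

lemma sum_clamp (a b : ℚ) (f : ℕ → ℚ) (hab : a ≤ b) (hf : ∀ k, f k ≤ f (k+1)) (N : ℕ) :
    ∑ k ∈ range N, max 0 (min b (f (k+1)) - max a (f k))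
      = max a (min b (f N)) - max a (min b (f 0)) := by
  rw [← Finset.sum_range_sub (fun k => max a (min b (f k)))]
  exact Finset.sum_congr rfl fun k _ => clamp_eq a b (f k) (f (k+1)) hab (hf k)

/-- If `n % m > 0` and the memory capacity satisfies `Q > ⌈n/m⌉ = n/m + 1`, then
there is an assignment of the `n` applications (common load `p`, unit memory) to
the `m` machines achieving maximum machine load exactly `p * n / m`. -/
theorem exists_perfectly_balanced (n m Q : ℕ) (p : ℚ) (hp : 0 < p) (hn : 0 < n)
    (hm : 0 < m) (hmod : n % m ≠ 0) (hQ : n / m + 1 < Q) :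
    ∃ x : Fin n → Fin m → ℚ,
      (∀ i j, 0 ≤ x i j) ∧
      (∀ i, p ≤ ∑ j, x i j) ∧
      (∀ j, (Finset.univ.filter (fun i => x i j ≠ 0)).card ≤ Q) ∧
      (∀ j, ∑ i, x i j ≤ p * n / m) := by
  set c : ℚ := (n : ℚ) / m with hc
  have hm0 : (0:ℚ) < m := by exact_mod_cast hm
  have hc0 : 0 ≤ c := by positivity
  have hmc : (m:ℚ) * c = n := by rw [hc]; field_simp [hm0.ne']
  refine ⟨fun i j => p * max 0 (min ((i:ℚ)+1) (((j:ℚ)+1)*c) - max (i:ℚ) ((j:ℚ)*c)),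
    ?_, ?_, ?_, ?_⟩
  · intro i j
    have : (0:ℚ) ≤ max 0 (min ((i:ℚ)+1) (((j:ℚ)+1)*c) - max (i:ℚ) ((j:ℚ)*c)) := le_max_left _ _
    positivity
  · intro i
    rw [← Finset.mul_sum]
    have hsum : ∑ j : Fin m, max 0 (min ((i:ℚ)+1) (((j:ℚ)+1)*c) - max (i:ℚ) ((j:ℚ)*c)) = 1 := by
      rw [Fin.sum_univ_eq_sum_range
        (fun j => max 0 (min ((i:ℚ)+1) (((j:ℚ)+1)*c) - max (i:ℚ) ((j:ℚ)*c)))]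
      have := sum_clamp (i:ℚ) ((i:ℚ)+1) (fun k => (k:ℚ)*c) (by linarith)
        (fun k => by push_cast; nlinarith) m
      simp only [Nat.cast_zero, zero_mul] at this
      rw [show (∑ j ∈ range m, max 0 (min ((i:ℚ)+1) (((j:ℚ)+1)*c) - max (i:ℚ) ((j:ℚ)*c)))
          = ∑ k ∈ range m, max 0 (min ((i:ℚ)+1) ((((k:ℕ)+1:ℕ):ℚ)*c) - max (i:ℚ) ((k:ℚ)*c))
        from Finset.sum_congr rfl (fun k _ => by push_cast; ring_nf), this]
      have hi1 : (i:ℚ) + 1 ≤ (m:ℚ)*c := by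
        rw [hmc]
        have : (i:ℕ) + 1 ≤ n := i.2
        exact_mod_cast this
      rw [min_eq_left hi1, max_eq_right (by linarith), min_eq_right (by positivity),
        max_eq_left (by positivity)]
      ring
    rw [hsum, mul_one]
  · intro j
    have hsub : ∀ i : Fin n, i ∈ (Finset.univ : Finset (Fin n)).filter
        (fun i : Fin n =>
          p * max 0 (min ((i:ℚ)+1) (((j:ℚ)+1)*c) - max (i:ℚ) ((j:ℚ)*c)) ≠ 0) →
        ((i:ℕ):ℤ) ∈ Finset.Ico (⌈(j:ℚ)*c⌉ - 1) ⌈((j:ℚ)+1)*c⌉ := by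
      intro i hi
      simp only [Finset.mem_filter, Finset.mem_univ, true_and] at hi
      have hmax : max 0 (min ((i:ℚ)+1) (((j:ℚ)+1)*c) - max (i:ℚ) ((j:ℚ)*c)) ≠ 0 := by
        intro h; exact hi (by rw [h, mul_zero])
      have hpos : 0 < min ((i:ℚ)+1) (((j:ℚ)+1)*c) - max (i:ℚ) ((j:ℚ)*c) := by
        rcases lt_trichotomy (min ((i:ℚ)+1) (((j:ℚ)+1)*c) - max (i:ℚ) ((j:ℚ)*c)) 0 with h|h|h
        · exact absurd (max_eq_left h.le) hmax
        · exact absurd (by rw [h]; simp) hmax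
        · exact h
      have h1 : (i:ℚ) < ((j:ℚ)+1)*c := by
        have := le_max_left (i:ℚ) ((j:ℚ)*c)
        have := min_le_right ((i:ℚ)+1) (((j:ℚ)+1)*c)
        linarith
      have h2 : (j:ℚ)*c < (i:ℚ)+1 := by
        have := le_max_right (i:ℚ) ((j:ℚ)*c)
        have := min_le_left ((i:ℚ)+1) (((j:ℚ)+1)*c)
        linarith
      rw [Finset.mem_Ico]
      constructor
      · have : ⌈(j:ℚ)*c⌉ ≤ ((i:ℕ):ℤ) + 1 := Int.ceil_le.2 (by push_cast; linarith)
        omega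
      · exact Int.lt_ceil.2 (by push_cast; linarith)
    have hcard := Finset.card_le_card_of_injOn (fun i : Fin n => ((i:ℕ):ℤ)) hsub
      (fun a _ b _ h => by
        simp only at h
        exact Fin.ext (by exact_mod_cast h))
    refine le_trans hcard ?_
    rw [Int.card_Ico]
    have hceil : ⌈c⌉ ≤ ((n / m : ℕ) : ℤ) + 1 := by
      apply Int.ceil_le.2
      have h1 : n < m * (n / m) + m := by
        have := Nat.div_add_mod n m
        have := Nat.mod_lt n hm
        omega
      have h2 : (n:ℚ) < (m:ℚ) * ((n / m : ℕ):ℚ) + m := by exact_mod_cast h1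
      rw [hc, div_le_iff₀ hm0]
      have h4 : ((((n:ℤ)/(m:ℤ)) : ℤ) : ℚ) = ((n/m : ℕ):ℚ) := by
        have h5 : ((n:ℤ)/(m:ℤ)) = ((n/m : ℕ) : ℤ) := by omega
        rw [h5]; norm_cast
      push_cast
      rw [h4]
      linarith
    have hadd : ⌈((j:ℚ)+1)*c⌉ ≤ ⌈(j:ℚ)*c⌉ + ⌈c⌉ := by
      calc ⌈((j:ℚ)+1)*c⌉ = ⌈(j:ℚ)*c + c⌉ := by ring_nf
        _ ≤ ⌈(j:ℚ)*c⌉ + ⌈c⌉ := Int.ceil_add_le _ _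
    have : (⌈((j:ℚ)+1)*c⌉ - (⌈(j:ℚ)*c⌉ - 1)) ≤ (Q:ℤ) := by
      have hQ' : ((n/m : ℕ) : ℤ) + 2 ≤ (Q:ℤ) := by exact_mod_cast hQ
      omega
    omega
  · intro j
    rw [← Finset.mul_sum]
    have hsum : ∑ i : Fin n, max 0 (min ((i:ℚ)+1) (((j:ℚ)+1)*c) - max (i:ℚ) ((j:ℚ)*c)) = c := by
      rw [Fin.sum_univ_eq_sum_range
        (fun i => max 0 (min ((i:ℚ)+1) (((j:ℚ)+1)*c) - max (i:ℚ) ((j:ℚ)*c)))]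
      have hj1 : ((j:ℚ)+1)*c ≤ (m:ℚ)*c := by
        have : (j:ℕ) + 1 ≤ m := j.2
        have : ((j:ℚ)+1) ≤ (m:ℚ) := by exact_mod_cast this
        nlinarith
      have hjc : (j:ℚ)*c ≤ ((j:ℚ)+1)*c := by nlinarith
      have := sum_clamp ((j:ℚ)*c) (((j:ℚ)+1)*c) (fun k => (k:ℚ)) hjc
        (fun k => by push_cast; linarith) n
      push_cast at this
      rw [show (∑ i ∈ range n, max 0 (min ((i:ℚ)+1) (((j:ℚ)+1)*c) - max (i:ℚ) ((j:ℚ)*c)))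
          = ∑ k ∈ range n, max 0 (min (((j:ℚ)+1)*c) ((k:ℚ)+1) - max ((j:ℚ)*c) (k:ℚ))
        from Finset.sum_congr rfl
          (fun k _ => by rw [min_comm ((k:ℚ)+1), max_comm (k:ℚ)]), this]
      have hn1 : ((j:ℚ)+1)*c ≤ (n:ℚ) := by rw [← hmc]; exact hj1
      have hjc0 : 0 ≤ (j:ℚ)*c := by positivity
      rw [min_eq_left hn1, max_eq_right hjc, min_eq_right (by linarith),
        max_eq_left (by linarith)]
      ring
    rw [hsum, hc, mul_div_assoc]
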